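/- With Q(M)=|M|² on symmetric 2×2 matrices, A° = 0 and D the identity, the function Q̄(μ,τ) := min over γ ∈ ℝ of (|A|² + 2|det A|) where A is the symmetric matrix with entries A₁₁ = μ, A₁₂ = A₂₁ = τ, A₂₂ = γ, equals (μ² + τ²)²/μ² if μ² > τ², and equals 4τ² if μ² ≤ τ². -/

import Mathlib

open Matrix

theorem stmt_11 (μ τ : ℝ) :
    (μ ^ 2 > τ ^ 2 →
      sInf {q : ℝ | ∃ γ : ℝ,
          q = (∑ i, ∑ j, ((!![μ, τ; τ, γ] : Matrix (Fin 2) (Fin 2) ℝ) i j) ^ 2)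
              + 2 * |(!![μ, τ; τ, γ] : Matrix (Fin 2) (Fin 2) ℝ).det|}
        = (μ ^ 2 + τ ^ 2) ^ 2 / μ ^ 2) ∧
    (μ ^ 2 ≤ τ ^ 2 →
      sInf {q : ℝ | ∃ γ : ℝ,
          q = (∑ i, ∑ j, ((!![μ, τ; τ, γ] : Matrix (Fin 2) (Fin 2) ℝ) i j) ^ 2)
              + 2 * |(!![μ, τ; τ, γ] : Matrix (Fin 2) (Fin 2) ℝ).det|}
        = 4 * τ ^ 2) := by
  have key : ∀ γ : ℝ,
      (∑ i, ∑ j, ((!![μ, τ; τ, γ] : Matrix (Fin 2) (Fin 2) ℝ) i j) ^ 2)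
        + 2 * |(!![μ, τ; τ, γ] : Matrix (Fin 2) (Fin 2) ℝ).det|
      = μ ^ 2 + 2 * τ ^ 2 + γ ^ 2 + 2 * |μ * γ - τ ^ 2| := by
    intro γ
    rw [Matrix.det_fin_two_of, Fin.sum_univ_two]
    simp [Fin.sum_univ_two]
    rw [show μ * γ - τ * τ = μ * γ - τ ^ 2 by ring]
    ring
  have hset : ∀ γ : ℝ, (μ ^ 2 + 2 * τ ^ 2 + γ ^ 2 + 2 * |μ * γ - τ ^ 2|) ∈
      {q : ℝ | ∃ γ : ℝ,
          q = (∑ i, ∑ j, ((!![μ, τ; τ, γ] : Matrix (Fin 2) (Fin 2) ℝ) i j) ^ 2)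
              + 2 * |(!![μ, τ; τ, γ] : Matrix (Fin 2) (Fin 2) ℝ).det|} := by
    intro γ; exact ⟨γ, (key γ).symm⟩
  constructor
  · intro h
    have hμ : μ ^ 2 > 0 := lt_of_le_of_lt (sq_nonneg τ) h
    have hμ0 : μ ≠ 0 := by intro h0; rw [h0] at hμ; simp at hμ
    apply le_antisymm
    · have := csInf_le ?_ (hset (τ ^ 2 / μ))
      · refine le_trans this (le_of_eq ?_)
        rw [show μ * (τ ^ 2 / μ) - τ ^ 2 = 0 by field_simp; ring]
        rw [abs_zero]
        field_simp
        ring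
      · refine ⟨0, fun x hx => ?_⟩
        obtain ⟨γ, rfl⟩ := hx
        rw [key γ]
        positivity
    · apply le_csInf ⟨_, hset 0⟩
      rintro q ⟨γ, rfl⟩
      rw [key γ]
      rw [div_le_iff₀ hμ]
      rcases abs_cases (μ * γ - τ ^ 2) with ⟨ha, hs⟩ | ⟨ha, hs⟩ <;> rw [ha]
      · nlinarith [mul_nonneg hs (show (0:ℝ) ≤ μ * γ + τ ^ 2 by nlinarith [sq_nonneg τ]),
          sq_nonneg γ]
      · nlinarith [mul_nonneg (show (0:ℝ) ≤ τ ^ 2 - μ * γ by linarith)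
          (show (0:ℝ) ≤ 2 * μ ^ 2 - μ * γ - τ ^ 2 by nlinarith), sq_nonneg γ]
  · intro h
    apply le_antisymm
    · have := csInf_le ?_ (hset μ)
      · refine le_trans this (le_of_eq ?_)
        rw [show μ * μ - τ ^ 2 = μ ^ 2 - τ ^ 2 by ring,
          abs_of_nonpos (by linarith)]
        ring
      · refine ⟨0, fun x hx => ?_⟩
        obtain ⟨γ, rfl⟩ := hx
        rw [key γ]
        positivity
    · apply le_csInf ⟨_, hset 0⟩
      rintro q ⟨γ, rfl⟩
      rw [key γ]
      nlinarith [neg_abs_le (μ * γ - τ ^ 2), sq_nonneg (γ - μ)]
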